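/- Under the non-degeneracy condition, S² = C where C_{λ,μ} = δ_{λ,μ̄}, i.e., Σ_ρ Y_{λ,ρ} Y_{μ,ρ} = δ_{λ̄,μ} w for S = w^{-1/2} Y. -/

import Mathlib

open Matrix

/-- Under the non-degeneracy condition, `S² = C` where
`C_{λ,μ} = δ_{λ,μ̄}`, i.e. `∑_ρ Y_{λ,ρ} Y_{μ,ρ} = δ_{λ̄,μ} w` for `S = w^{-1/2} Y`. -/
theorem S_squared_eq_conjugation
    {Δ : Type*} [Fintype Δ] [DecidableEq Δ] (z0 : Δ) (bar : Δ → Δ)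
    (Nc : Δ → Δ → Δ → ℕ) (d : Δ → ℝ) (ω : Δ → ℂ) (Y : Δ → Δ → ℂ)
    (hNcomm : ∀ l m n, Nc l m n = Nc m l n)
    (hNid : ∀ l m, Nc z0 l m = if l = m then 1 else 0)
    (hFrob : ∀ l m n, Nc l m n = Nc (bar l) n m ∧ Nc l m n = Nc n (bar m) l)
    (hassoc : ∀ l n r s, ∑ m, Nc l m n * Nc r s m = ∑ t, Nc l r t * Nc t s n)
    (hd : ∀ l, 0 < d l) (hd0 : d z0 = 1) (hdbar : ∀ l, d (bar l) = d l)
    (hdim : ∀ l m, ∑ n, (Nc l m n : ℝ) * d n = d l * d m)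
    (hω : ∀ l, ‖ω l‖ = 1)
    (hY : ∀ m n, Y m n = ∑ l, (ω m * ω n / ω l) * (Nc m n l : ℂ) * (d l : ℂ))
    (hYsym : ∀ l m, Y l m = Y m l)
    (hYconj : ∀ l m, star (Y (bar l) m) = Y l m)
    (hYprod : ∀ n m r, Y n r * Y m r = (d r : ℂ) * ∑ l, (Nc m n l : ℂ) * Y r l)
    (hnondeg : ∀ l, ∑ m, star (Y l m) * (d m : ℂ) =
      if l = z0 then ((∑ n, d n ^ 2 : ℝ) : ℂ) else 0) :
    (∀ l m, ∑ r, Y l r * Y m r =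
      if bar l = m then ((∑ n, d n ^ 2 : ℝ) : ℂ) else 0) ∧
    (let S : Matrix Δ Δ ℂ :=
       Matrix.of fun l m => Y l m / ((Real.sqrt (∑ n, d n ^ 2) : ℝ) : ℂ)
     let C : Matrix Δ Δ ℂ := Matrix.of fun l m => if l = bar m then 1 else 0
     S * S = C) := by
  -- bar z0 = z0
  have hbarz0 : bar z0 = z0 := by
    have h1 : Nc z0 z0 z0 = 1 := by rw [hNid]; simp
    have h2 : Nc z0 z0 z0 = Nc z0 (bar z0) z0 := (hFrob z0 z0 z0).2
    simp only [hNid, if_pos rfl] at h2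
    by_contra h
    simp [h] at h2
  -- bar is an involution
  have hbarbar : ∀ l, bar (bar l) = l := by
    intro l
    have h1 : Nc l z0 l = 1 := by rw [hNcomm, hNid]; simp
    have h2 : Nc l z0 l = Nc (bar (bar l)) z0 l := by
      rw [(hFrob l z0 l).1, (hFrob (bar l) l z0).1]
    rw [hNcomm (bar (bar l)) z0 l, hNid] at h2
    simp only [hNcomm, hNid, if_pos rfl] at h2
    by_contra h
    simp [h] at h2
  -- N_{μλ}^{0} = δ_{bar λ, μ}
  have hN0 : ∀ l m, Nc m l z0 = if bar l = m then 1 else 0 := by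
    intro l m
    rw [(hFrob m l z0).2, hNid]
  -- column sums
  have hcol : ∀ ν, ∑ ρ, (d ρ : ℂ) * Y ρ ν =
      if ν = z0 then ((∑ n, d n ^ 2 : ℝ) : ℂ) else 0 := by
    intro ν
    have : ∀ ρ, (d ρ : ℂ) * Y ρ ν = star (Y (bar ν) ρ) * (d ρ : ℂ) := by
      intro ρ
      rw [hYconj, hYsym]
      ring
    rw [Finset.sum_congr rfl fun ρ _ => this ρ, hnondeg]
    have hiff : (bar ν = z0) = (ν = z0) :=
      propext ⟨fun h => by rw [← hbarbar ν, h, hbarz0],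
               fun h => by rw [h, hbarz0]⟩
    simp only [hiff]
  have key : ∀ l m, ∑ r, Y l r * Y m r =
      if bar l = m then ((∑ n, d n ^ 2 : ℝ) : ℂ) else 0 := by
    intro l m
    calc ∑ r, Y l r * Y m r
        = ∑ r, ∑ ν, (Nc m l ν : ℂ) * ((d r : ℂ) * Y r ν) := by
          refine Finset.sum_congr rfl fun r _ => ?_
          rw [hYprod l m r, Finset.mul_sum]
          exact Finset.sum_congr rfl fun ν _ => by ring
      _ = ∑ ν, (Nc m l ν : ℂ) * ∑ r, (d r : ℂ) * Y r ν := by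
          rw [Finset.sum_comm]
          exact Finset.sum_congr rfl fun ν _ => by rw [Finset.mul_sum]
      _ = (Nc m l z0 : ℂ) * ((∑ n, d n ^ 2 : ℝ) : ℂ) := by
          rw [Finset.sum_congr rfl fun ν _ => by rw [hcol ν]]
          simp
      _ = if bar l = m then ((∑ n, d n ^ 2 : ℝ) : ℂ) else 0 := by
          rw [hN0]
          split <;> simp
  refine ⟨key, ?_⟩
  intro S C
  have hwpos : (0:ℝ) < ∑ n, d n ^ 2 :=
    Finset.sum_pos (fun n _ => pow_pos (hd n) 2) ⟨z0, Finset.mem_univ z0⟩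
  have hsq : ((Real.sqrt (∑ n, d n ^ 2) : ℝ) : ℂ) *
      ((Real.sqrt (∑ n, d n ^ 2) : ℝ) : ℂ) = ((∑ n, d n ^ 2 : ℝ) : ℂ) := by
    rw [← Complex.ofReal_mul, Real.mul_self_sqrt hwpos.le]
  have hsne : ((Real.sqrt (∑ n, d n ^ 2) : ℝ) : ℂ) ≠ 0 := by
    simp only [ne_eq, Complex.ofReal_eq_zero]
    exact (Real.sqrt_pos.mpr hwpos).ne'
  ext l m
  simp only [S, C, Matrix.mul_apply, Matrix.of_apply]
  have : ∑ r, Y l r / (Real.sqrt (∑ n, d n ^ 2) : ℂ) *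
      (Y r m / (Real.sqrt (∑ n, d n ^ 2) : ℂ)) =
      (∑ r, Y l r * Y m r) / ((∑ n, d n ^ 2 : ℝ) : ℂ) := by
    rw [Finset.sum_div]
    refine Finset.sum_congr rfl fun r _ => ?_
    rw [hYsym m r, ← hsq]
    field_simp
  rw [this, key l m]
  have hiff : bar l = m ↔ l = bar m := by
    constructor
    · intro h; rw [← h, hbarbar]
    · intro h; rw [h, hbarbar]
  have hwne : ((∑ n, d n ^ 2 : ℝ) : ℂ) ≠ 0 := by
    simp only [ne_eq, Complex.ofReal_eq_zero]; exact hwpos.ne'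
  split
  · rw [if_pos (hiff.mp ‹_›), div_self hwne]
  · rw [if_neg (fun h => ‹¬ bar l = m› (hiff.mpr h)), zero_div]
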